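/- If (ρ̄, φ̄) is a classical solution of the stationary problem, then ρ̄(0) = ρ₋, φ̄(x) = F(ρ̄(x)) + φ₊ for all x ≥ 0, and for all x > 0: ρ̄'(x) = −√(G(ρ̄(x)))/F'(ρ̄(x)) in the case φ₋ > φ₊, while ρ̄'(x) = +√(G(ρ̄(x)))/F'(ρ̄(x)) in the case φ₋ < φ₊. -/

import Mathlib

open MeasureTheory Set Filter Topology

noncomputable section



/-- A function with vanishing derivative on `(0,∞)` is constant there. -/
private lemma aux_const {f : ℝ → ℝ} (h : ∀ t : ℝ, 0 < t → HasDerivAt f 0 t)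
    {x y : ℝ} (hx : 0 < x) (hy : 0 < y) : f x = f y := by
  have key : ∀ u v : ℝ, 0 < u → u < v → f u = f v := by
    intro u v hu huv
    have hsub : Icc u v ⊆ Ioi 0 := fun t ht => lt_of_lt_of_le hu ht.1
    obtain ⟨c, hc, hc'⟩ := exists_deriv_eq_slope f huv
      (fun t ht => (h t (hsub ht)).continuousAt.continuousWithinAt)
      (fun t ht => ((h t (hsub (Ioo_subset_Icc_self ht))).differentiableAt).differentiableWithinAt)
    have hc0 : deriv f c = 0 := (h c (hsub (Ioo_subset_Icc_self hc))).deriv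
    rw [hc0] at hc'
    have hne : v - u ≠ 0 := sub_ne_zero.2 (ne_of_gt huv)
    have := (div_eq_iff hne).1 hc'.symm
    linarith
  rcases lt_trichotomy x y with hlt | heq | hgt
  · exact key x y hx hlt
  · rw [heq]
  · exact (key y x hy hgt).symm

/-- If `f → L` and `f'' → 0` at `+∞`, then `f' → 0` at `+∞`. -/
private lemma aux_deriv_tendsto {f : ℝ → ℝ} {L : ℝ}
    (h1 : ∀ x : ℝ, 0 < x → HasDerivAt f (deriv f x) x)
    (h2 : ∀ x : ℝ, 0 < x → HasDerivAt (deriv f) (deriv (deriv f) x) x)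
    (hL : Tendsto f atTop (nhds L)) (h0 : Tendsto (deriv (deriv f)) atTop (nhds 0)) :
    Tendsto (deriv f) atTop (nhds 0) := by
  rw [Metric.tendsto_atTop] at hL h0 ⊢
  intro ε hε
  obtain ⟨N₁, hN₁⟩ := hL (ε / 4) (by linarith)
  obtain ⟨N₂, hN₂⟩ := h0 (ε / 4) (by linarith)
  refine ⟨max (max N₁ N₂) 1, fun x hx => ?_⟩
  have hx1 : (1 : ℝ) ≤ x := le_trans (le_max_right _ _) hx
  have hxN₁ : N₁ ≤ x := le_trans (le_trans (le_max_left _ _) (le_max_left _ _)) hx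
  have hxN₂ : N₂ ≤ x := le_trans (le_trans (le_max_right _ _) (le_max_left _ _)) hx
  have hxpos : (0 : ℝ) < x := lt_of_lt_of_le one_pos hx1
  have hIcc : Icc x (x + 1) ⊆ Ioi 0 := fun t ht => lt_of_lt_of_le hxpos ht.1
  -- MVT for f on [x, x+1]
  obtain ⟨c, hc, hc'⟩ := exists_deriv_eq_slope f (show x < x + 1 by linarith)
    (fun t ht => (h1 t (hIcc ht)).continuousAt.continuousWithinAt)
    (fun t ht => ((h1 t (hIcc (Ioo_subset_Icc_self ht))).differentiableAt).differentiableWithinAt)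
  -- MVT for f' on [x, c]
  have hIcc2 : Icc x c ⊆ Ioi 0 := fun t ht => lt_of_lt_of_le hxpos ht.1
  obtain ⟨d, hd, hd'⟩ := exists_deriv_eq_slope (deriv f) hc.1
    (fun t ht => (h2 t (hIcc2 ht)).continuousAt.continuousWithinAt)
    (fun t ht => ((h2 t (hIcc2 (Ioo_subset_Icc_self ht))).differentiableAt).differentiableWithinAt)
  have hcx : c - x ≠ 0 := sub_ne_zero.2 (ne_of_gt hc.1)
  have e1 : deriv f c = f (x + 1) - f x := by
    rw [hc']; norm_num
  have e2 : deriv f c - deriv f x = deriv (deriv f) d * (c - x) := by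
    field_simp at hd'; linarith [hd']
  have hfx : |f x - L| < ε / 4 := by
    have := hN₁ x hxN₁; rwa [Real.dist_eq] at this
  have hfx1 : |f (x + 1) - L| < ε / 4 := by
    have := hN₁ (x + 1) (by linarith); rwa [Real.dist_eq] at this
  have hfd : |deriv (deriv f) d| < ε / 4 := by
    have := hN₂ d (le_trans hxN₂ hd.1.le); rwa [Real.dist_eq, sub_zero] at this
  have hcx1 : |c - x| ≤ 1 := by
    rw [abs_of_pos (by linarith [hc.1] : (0:ℝ) < c - x)]; linarith [hc.2]
  have hQ : |deriv (deriv f) d * (c - x)| ≤ ε / 4 := by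
    rw [abs_mul]
    calc |deriv (deriv f) d| * |c - x| ≤ (ε / 4) * 1 :=
          mul_le_mul hfd.le hcx1 (abs_nonneg _) (by linarith)
      _ = ε / 4 := by ring
  have hrepr : deriv f x = (f (x + 1) - L) - (f x - L) - deriv (deriv f) d * (c - x) := by
    have : deriv f x = deriv f c - deriv (deriv f) d * (c - x) := by linarith [e2]
    rw [this, e1]; ring
  rw [Real.dist_eq, sub_zero, hrepr]
  have h1' := abs_lt.1 hfx
  have h2' := abs_lt.1 hfx1
  have h3' := abs_le.1 hQ
  rw [abs_lt]
  constructor <;> linarith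

/-- Mean value theorem anchored at `ρp`, on the positive half-line. -/
private lemma aux_mvt {f f' : ℝ → ℝ} (h : ∀ t : ℝ, 0 < t → HasDerivAt f (f' t) t)
    {ρp s : ℝ} (hρp : 0 < ρp) (hs : 0 < s) :
    ∃ ξ ∈ uIcc ρp s, f s - f ρp = f' ξ * (s - ρp) := by
  rcases lt_trichotomy ρp s with hlt | heq | hgt
  · have hsub : Icc ρp s ⊆ Ioi 0 := fun t ht => lt_of_lt_of_le hρp ht.1
    obtain ⟨ξ, hξ, hξ'⟩ := exists_deriv_eq_slope f hlt
      (fun t ht => (h t (hsub ht)).continuousAt.continuousWithinAt)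
      (fun t ht => ((h t (hsub (Ioo_subset_Icc_self ht))).differentiableAt).differentiableWithinAt)
    refine ⟨ξ, ?_, ?_⟩
    · rw [uIcc_of_le hlt.le]; exact Ioo_subset_Icc_self hξ
    · rw [(h ξ (hsub (Ioo_subset_Icc_self hξ))).deriv] at hξ'
      have hne : s - ρp ≠ 0 := sub_ne_zero.2 (ne_of_gt hlt)
      field_simp at hξ'; linarith
  · exact ⟨ρp, left_mem_uIcc, by rw [heq]; ring⟩
  · have hsub : Icc s ρp ⊆ Ioi 0 := fun t ht => lt_of_lt_of_le hs ht.1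
    obtain ⟨ξ, hξ, hξ'⟩ := exists_deriv_eq_slope f hgt
      (fun t ht => (h t (hsub ht)).continuousAt.continuousWithinAt)
      (fun t ht => ((h t (hsub (Ioo_subset_Icc_self ht))).differentiableAt).differentiableWithinAt)
    refine ⟨ξ, ?_, ?_⟩
    · rw [uIcc_of_ge hgt.le]; exact Ioo_subset_Icc_self hξ
    · rw [(h ξ (hsub (Ioo_subset_Icc_self hξ))).deriv] at hξ'
      have hne : ρp - s ≠ 0 := sub_ne_zero.2 (ne_of_gt hgt)
      field_simp at hξ'; linarith


/-- `F(s) = ∫_{ρ₊}^s p'(τ)/(μ τ) dτ`. -/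
def Ffun (p : ℝ → ℝ) (μ ρp s : ℝ) : ℝ :=
  ∫ τ in ρp..s, deriv p τ / (μ * τ)

/-- `H(s) = b F(s) + b φ₊ - a s`. -/
def Hfun (p : ℝ → ℝ) (μ a b ρp φp s : ℝ) : ℝ :=
  b * Ffun p μ ρp s + b * φp - a * s

/-- `G(s) = ∫_{ρ₊}^s 2 F'(τ) H(τ) dτ`. -/
def Gfun (p : ℝ → ℝ) (μ a b ρp φp s : ℝ) : ℝ :=
  ∫ τ in ρp..s, 2 * (deriv p τ / (μ * τ)) * Hfun p μ a b ρp φp τ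

/-- The structural condition `φ₋ - φ₊ + ∫₀^{ρ₊} p'(s)/(μ s) ds > 0`. -/
def CondPlus (p : ℝ → ℝ) (μ ρp φp φm : ℝ) : Prop :=
  ¬ IntegrableOn (fun s => deriv p s / (μ * s)) (Set.Ioo 0 ρp) ∨
    0 < φm - φp + ∫ s in Set.Ioo 0 ρp, deriv p s / (μ * s)

/-- Classical solution of the stationary problem on `ℝ₊ = (0,∞)`. -/
def IsStatSol (p : ℝ → ℝ) (μ a b ρp φp φm : ℝ) (ρb φb : ℝ → ℝ) : Prop :=
  ContDiffOn ℝ 1 ρb (Set.Ici 0) ∧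
  ContDiffOn ℝ 2 φb (Set.Ici 0) ∧
  (∀ x : ℝ, 0 ≤ x → 0 < ρb x) ∧
  (∀ x : ℝ, 0 < x → deriv (fun y => p (ρb y)) x = μ * ρb x * deriv φb x) ∧
  (∀ x : ℝ, 0 < x → deriv (deriv φb) x + a * ρb x - b * φb x = 0) ∧
  φb 0 = φm ∧
  Tendsto ρb atTop (nhds ρp) ∧
  Tendsto φb atTop (nhds φp)

/-- Any classical stationary solution satisfies `ρ̄(0) = ρ₋`, `φ̄ = F(ρ̄) + φ₊`, and the
first-order equation `ρ̄' = ∓ √(G(ρ̄)) / F'(ρ̄)` according to the sign of `φ₋ - φ₊`. -/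
theorem stmt6 (p : ℝ → ℝ) (μ a b ρp φp φm ρm : ℝ)
    (hμ : 0 < μ) (ha : 0 < a) (hb : 0 < b)
    (hp3 : ContDiffOn ℝ 3 p (Set.Ioi 0))
    (hp' : ∀ ρ : ℝ, 0 < ρ → a * μ / b * ρ < deriv p ρ)
    (hρp : 0 < ρp) (hφp : 0 < φp) (hcomp : a * ρp = b * φp)
    (hne : φm ≠ φp) (hint : CondPlus p μ ρp φp φm)
    (hρm : 0 < ρm) (hFρm : Ffun p μ ρp ρm = φm - φp)
    (ρb φb : ℝ → ℝ) (hsol : IsStatSol p μ a b ρp φp φm ρb φb) :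
    ρb 0 = ρm ∧
    (∀ x : ℝ, 0 ≤ x → φb x = Ffun p μ ρp (ρb x) + φp) ∧
    (φp < φm → ∀ x : ℝ, 0 < x →
      deriv ρb x =
        - Real.sqrt (Gfun p μ a b ρp φp (ρb x)) / (deriv p (ρb x) / (μ * ρb x))) ∧
    (φm < φp → ∀ x : ℝ, 0 < x →
      deriv ρb x =
        Real.sqrt (Gfun p μ a b ρp φp (ρb x)) / (deriv p (ρb x) / (μ * ρb x))) := by
  obtain ⟨hρC, hφC, hρpos, hode1, hode2, hφ0, hρtend, hφtend⟩ := hsol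
  set g : ℝ → ℝ := fun τ => deriv p τ / (μ * τ) with hg_def
  -- basic continuity and positivity of g
  have hp'cont : ContinuousOn (deriv p) (Ioi 0) :=
    hp3.continuousOn_deriv_of_isOpen isOpen_Ioi (by norm_num)
  have hgcont : ContinuousOn g (Ioi 0) := by
    apply hp'cont.div (continuousOn_const.mul continuousOn_id)
    intro s hs
    exact (mul_pos hμ hs).ne'
  have hp'pos : ∀ s : ℝ, 0 < s → 0 < deriv p s := fun s hs =>
    lt_trans (by positivity) (hp' s hs)
  have hgpos : ∀ s : ℝ, 0 < s → 0 < g s := fun s hs =>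
    div_pos (hp'pos s hs) (mul_pos hμ hs)
  -- F facts
  have huIcc : ∀ s : ℝ, 0 < s → uIcc ρp s ⊆ Ioi 0 := by
    intro s hs t ht
    exact lt_of_lt_of_le (lt_min hρp hs) ht.1
  have hFderiv : ∀ s : ℝ, 0 < s → HasDerivAt (Ffun p μ ρp) (g s) s := by
    intro s hs
    have hint' : IntervalIntegrable g volume ρp s :=
      (hgcont.mono (huIcc s hs)).intervalIntegrable
    exact intervalIntegral.integral_hasDerivAt_right hint'
      (hgcont.stronglyMeasurableAtFilter isOpen_Ioi s hs)
      (hgcont.continuousAt (Ioi_mem_nhds hs))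
  have hF0 : Ffun p μ ρp ρp = 0 := intervalIntegral.integral_same
  have hFcont : ContinuousOn (Ffun p μ ρp) (Ioi 0) := fun s hs =>
    (hFderiv s hs).continuousAt.continuousWithinAt
  have hFmono : StrictMonoOn (Ffun p μ ρp) (Ioi 0) := by
    apply strictMonoOn_of_deriv_pos (convex_Ioi 0) hFcont
    intro s hs
    rw [interior_Ioi] at hs
    rw [(hFderiv s hs).deriv]
    exact hgpos s hs
  -- H facts
  have hHderiv : ∀ s : ℝ, 0 < s → HasDerivAt (Hfun p μ a b ρp φp) (b * g s - a) s := by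
    intro s hs
    have h1 := (((hFderiv s hs).const_mul b).add_const (b * φp)).sub
      ((hasDerivAt_id s).const_mul a)
    rw [show b * g s - a = b * g s - a * 1 by ring]
    exact h1
  have hHcont : ContinuousOn (Hfun p μ a b ρp φp) (Ioi 0) := fun s hs =>
    (hHderiv s hs).continuousAt.continuousWithinAt
  have hHρp : Hfun p μ a b ρp φp ρp = 0 := by
    unfold Hfun; rw [hF0]; linarith
  have hH'pos : ∀ s : ℝ, 0 < s → 0 < b * g s - a := by
    intro s hs
    have h1 := hp' s hs
    have h2 : a * μ * s < b * deriv p s := by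
      have : b * (a * μ / b * s) < b * deriv p s := by
        exact mul_lt_mul_of_pos_left h1 hb
      calc a * μ * s = b * (a * μ / b * s) := by field_simp
        _ < b * deriv p s := this
    have h3 : a < b * g s := by
      rw [hg_def]
      show a < b * (deriv p s / (μ * s))
      rw [mul_div_assoc', lt_div_iff₀ (mul_pos hμ hs)]
      nlinarith
    linarith
  have hHmono : StrictMonoOn (Hfun p μ a b ρp φp) (Ioi 0) := by
    apply strictMonoOn_of_deriv_pos (convex_Ioi 0) hHcont
    intro s hs
    rw [interior_Ioi] at hs
    rw [(hHderiv s hs).deriv]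
    exact hH'pos s hs
  -- G facts
  have hg2cont : ContinuousOn (fun τ => 2 * g τ * Hfun p μ a b ρp φp τ) (Ioi 0) :=
    (continuousOn_const.mul hgcont).mul hHcont
  have hGderiv : ∀ s : ℝ, 0 < s →
      HasDerivAt (Gfun p μ a b ρp φp) (2 * g s * Hfun p μ a b ρp φp s) s := by
    intro s hs
    have hint' : IntervalIntegrable (fun τ => 2 * g τ * Hfun p μ a b ρp φp τ) volume ρp s :=
      (hg2cont.mono (huIcc s hs)).intervalIntegrable
    exact intervalIntegral.integral_hasDerivAt_right hint'
      (hg2cont.stronglyMeasurableAtFilter isOpen_Ioi s hs)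
      (hg2cont.continuousAt (Ioi_mem_nhds hs))
  have hGcont : ContinuousOn (Gfun p μ a b ρp φp) (Ioi 0) := fun s hs =>
    (hGderiv s hs).continuousAt.continuousWithinAt
  have hG0 : Gfun p μ a b ρp φp ρp = 0 := intervalIntegral.integral_same
  have hGpos : ∀ s : ℝ, 0 < s → s ≠ ρp → 0 < Gfun p μ a b ρp φp s := by
    intro s hs hne'
    rcases lt_or_gt_of_ne hne' with hlt | hgt
    · -- s < ρp : G strictly decreasing on Ioc 0 ρp
      have hanti : StrictAntiOn (Gfun p μ a b ρp φp) (Ioc 0 ρp) := by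
        apply strictAntiOn_of_deriv_neg (convex_Ioc 0 ρp)
          (hGcont.mono (fun t ht => ht.1))
        intro t ht
        rw [interior_Ioc] at ht
        rw [(hGderiv t ht.1).deriv]
        have hHneg : Hfun p μ a b ρp φp t < 0 := by
          have := hHmono ht.1 (mem_Ioi.2 hρp) ht.2
          rwa [hHρp] at this
        have := hgpos t ht.1
        nlinarith
      have := hanti ⟨hs, hlt.le⟩ ⟨hρp, le_rfl⟩ hlt
      rwa [hG0] at this
    · -- ρp < s : G strictly increasing on Ici ρp
      have hmono : StrictMonoOn (Gfun p μ a b ρp φp) (Ici ρp) := by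
        apply strictMonoOn_of_deriv_pos (convex_Ici ρp)
          (hGcont.mono (fun t ht => lt_of_lt_of_le hρp ht))
        intro t ht
        rw [interior_Ici] at ht
        have htpos : 0 < t := lt_trans hρp ht
        rw [(hGderiv t htpos).deriv]
        have hHpos : 0 < Hfun p μ a b ρp φp t := by
          have := hHmono (mem_Ioi.2 hρp) (mem_Ioi.2 htpos) ht
          rwa [hHρp] at this
        have := hgpos t htpos
        positivity
      have := hmono self_mem_Ici (mem_Ici.2 hgt.le) hgt
      rwa [hG0] at this
  -- regularity of the solution
  have hρcont : ContinuousOn ρb (Ici 0) := hρC.continuousOn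
  have hφcont : ContinuousOn φb (Ici 0) := hφC.continuousOn
  have hρdiff : ∀ x : ℝ, 0 < x → HasDerivAt ρb (deriv ρb x) x := by
    intro x hx
    exact ((hρC.differentiableOn one_ne_zero x (le_of_lt hx)).differentiableAt
      (Ici_mem_nhds hx)).hasDerivAt
  have hφdiff : ∀ x : ℝ, 0 < x → HasDerivAt φb (deriv φb x) x := by
    intro x hx
    exact ((hφC.differentiableOn (by norm_num) x (le_of_lt hx)).differentiableAt
      (Ici_mem_nhds hx)).hasDerivAt
  have hφ'C : ContDiffOn ℝ 1 (deriv φb) (Ioi 0) :=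
    (hφC.mono (Ioi_subset_Ici le_rfl)).deriv_of_isOpen isOpen_Ioi (by norm_num)
  have hwdiff : ∀ x : ℝ, 0 < x → HasDerivAt (deriv φb) (deriv (deriv φb) x) x := by
    intro x hx
    exact ((hφ'C.differentiableOn one_ne_zero x hx).differentiableAt
      (Ioi_mem_nhds hx)).hasDerivAt
  have hwcont : ContinuousOn (deriv φb) (Ioi 0) := hφ'C.continuousOn
  have hpdiff : ∀ s : ℝ, 0 < s → HasDerivAt p (deriv p s) s := by
    intro s hs
    exact ((hp3.differentiableOn (by norm_num) s hs).differentiableAt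
      (Ioi_mem_nhds hs)).hasDerivAt
  -- key relation : φb' = g(ρb) ρb'
  have hkey : ∀ x : ℝ, 0 < x → deriv φb x = g (ρb x) * deriv ρb x := by
    intro x hx
    have hρx := hρpos x hx.le
    have hchain : HasDerivAt (fun y => p (ρb y)) (deriv p (ρb x) * deriv ρb x) x :=
      (hpdiff _ hρx).comp x (hρdiff x hx)
    have heq := hode1 x hx
    rw [hchain.deriv] at heq
    show deriv φb x = deriv p (ρb x) / (μ * ρb x) * deriv ρb x
    rw [div_mul_eq_mul_div, eq_div_iff (ne_of_gt (mul_pos hμ hρx))]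
    linarith
  have hFρb_deriv : ∀ x : ℝ, 0 < x →
      HasDerivAt (fun y => Ffun p μ ρp (ρb y)) (deriv φb x) x := by
    intro x hx
    have h := (hFderiv _ (hρpos x hx.le)).comp x (hρdiff x hx)
    rwa [← hkey x hx] at h
  -- Part A : φb = F(ρb) + φp
  have hFtend : Tendsto (fun x => Ffun p μ ρp (ρb x)) atTop (nhds 0) := by
    have h1 : Tendsto (Ffun p μ ρp) (nhds ρp) (nhds (Ffun p μ ρp ρp)) :=
      (hFderiv ρp hρp).continuousAt.tendsto
    rw [hF0] at h1
    exact h1.comp hρtend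
  have hA : ∀ x : ℝ, 0 ≤ x → φb x = Ffun p μ ρp (ρb x) + φp := by
    set D : ℝ → ℝ := fun x => φb x - Ffun p μ ρp (ρb x) with hD_def
    have hDderiv : ∀ x : ℝ, 0 < x → HasDerivAt D 0 x := by
      intro x hx
      have h := (hφdiff x hx).sub (hFρb_deriv x hx)
      rw [sub_self] at h; exact h
    have hDtend : Tendsto D atTop (nhds φp) := by
      have := hφtend.sub hFtend
      simpa using this
    have hDval : ∀ x : ℝ, 0 < x → D x = φp := by
      intro x hx
      have h1 : Tendsto D atTop (nhds (D x)) := by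
        refine Tendsto.congr' ?_ tendsto_const_nhds
        filter_upwards [eventually_gt_atTop 0] with y hy
        exact (aux_const hDderiv hx hy)
      exact tendsto_nhds_unique h1 hDtend
    have hDcont : ContinuousOn D (Ici 0) :=
      hφcont.sub (hFcont.comp hρcont (fun x hx => hρpos x hx))
    have hD0 : D 0 = φp := by
      have h1 : Tendsto D (nhdsWithin 0 (Ioi 0)) (nhds (D 0)) :=
        ((hDcont 0 Set.self_mem_Ici).mono_left (nhdsWithin_mono 0 Ioi_subset_Ici_self))
      have h2 : Tendsto D (nhdsWithin 0 (Ioi 0)) (nhds φp) := by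
        refine Tendsto.congr' ?_ tendsto_const_nhds
        filter_upwards [eventually_mem_nhdsWithin] with y hy
        exact (hDval y hy).symm
      exact tendsto_nhds_unique h1 h2
    intro x hx
    rcases eq_or_lt_of_le hx with heq | hlt
    · subst heq
      have := hD0
      simp only [hD_def] at this
      linarith
    · have := hDval x hlt; rw [hD_def] at this
      simp only at this; linarith
  -- Part B : ρb 0 = ρm
  have hB : ρb 0 = ρm := by
    have h1 : Ffun p μ ρp (ρb 0) = φm - φp := by
      have := hA 0 le_rfl
      rw [hφ0] at this
      linarith
    exact hFmono.injOn (hρpos 0 le_rfl) hρm (by rw [h1, hFρm])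
  -- relation between the second-order ODE and H
  have hψH : ∀ x : ℝ, 0 ≤ x → b * φb x - a * ρb x = Hfun p μ a b ρp φp (ρb x) := by
    intro x hx
    rw [hA x hx]
    unfold Hfun
    ring
  have hwderiv : ∀ x : ℝ, 0 < x →
      HasDerivAt (deriv φb) (Hfun p μ a b ρp φp (ρb x)) x := by
    intro x hx
    have h := hwdiff x hx
    have he := hode2 x hx
    have : deriv (deriv φb) x = Hfun p μ a b ρp φp (ρb x) := by
      rw [← hψH x hx.le]; linarith
    rwa [this] at h
  -- energy identity : (φb')² = G(ρb)
  have henergy : ∀ x : ℝ, 0 < x → (deriv φb x) ^ 2 = Gfun p μ a b ρp φp (ρb x) := by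
    set q : ℝ → ℝ := fun x => (deriv φb x) ^ 2 - Gfun p μ a b ρp φp (ρb x) with hq_def
    have hqderiv : ∀ x : ℝ, 0 < x → HasDerivAt q 0 x := by
      intro x hx
      have h1 : HasDerivAt (fun y => (deriv φb y) ^ 2)
          (2 * deriv φb x * Hfun p μ a b ρp φp (ρb x)) x := by
        have := (hwderiv x hx).pow 2
        norm_num at this
        exact this.congr_deriv (by ring)
      have h2 : HasDerivAt (fun y => Gfun p μ a b ρp φp (ρb y))
          (2 * deriv φb x * Hfun p μ a b ρp φp (ρb x)) x := by
        have h3 := (hGderiv _ (hρpos x hx.le)).comp x (hρdiff x hx)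
        refine h3.congr_deriv ?_
        rw [hkey x hx]
        ring
      have := h1.sub h2
      rw [sub_self] at this; exact this
    have hwtend : Tendsto (deriv φb) atTop (nhds 0) := by
      apply aux_deriv_tendsto hφdiff hwdiff hφtend
      have h1 : Tendsto (fun x => b * φb x - a * ρb x) atTop (nhds 0) := by
        have := (hφtend.const_mul b).sub (hρtend.const_mul a)
        have hz : b * φp - a * ρp = 0 := by linarith
        rwa [hz] at this
      refine Tendsto.congr' ?_ h1
      filter_upwards [eventually_gt_atTop 0] with y hy
      have := hode2 y hy
      linarith
    have hGtend : Tendsto (fun x => Gfun p μ a b ρp φp (ρb x)) atTop (nhds 0) := by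
      have h1 : Tendsto (Gfun p μ a b ρp φp) (nhds ρp) (nhds (Gfun p μ a b ρp φp ρp)) :=
        (hGderiv ρp hρp).continuousAt.tendsto
      rw [hG0] at h1
      exact h1.comp hρtend
    have hqtend : Tendsto q atTop (nhds 0) := by
      have := (hwtend.pow 2).sub hGtend
      simpa using this
    have hqval : ∀ x : ℝ, 0 < x → q x = 0 := by
      intro x hx
      have h1 : Tendsto q atTop (nhds (q x)) := by
        refine Tendsto.congr' ?_ tendsto_const_nhds
        filter_upwards [eventually_gt_atTop 0] with y hy
        exact (aux_const hqderiv hx hy)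
      exact tendsto_nhds_unique h1 hqtend
    intro x hx
    have := hqval x hx
    rw [hq_def] at this
    simp only at this
    linarith
  -- ρb never touches ρp on (0,∞) (Grönwall backward-uniqueness argument)
  have hnever : ∀ x : ℝ, 0 < x → ρb x ≠ ρp := by
    intro x₁ hx₁ hcontra
    have hψx₁ : φb x₁ = φp := by rw [hA x₁ hx₁.le, hcontra, hF0]; ring
    have hwx₁ : deriv φb x₁ = 0 := by
      have h := henergy x₁ hx₁
      rw [hcontra, hG0] at h
      exact (pow_eq_zero_iff two_ne_zero).1 h
    -- min/max of ρb on [0, x₁]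
    have hsubI : Icc (0:ℝ) x₁ ⊆ Ici 0 := fun t ht => ht.1
    have hρcont' : ContinuousOn ρb (Icc 0 x₁) := hρcont.mono hsubI
    have hIne : (Icc (0:ℝ) x₁).Nonempty := ⟨0, le_rfl, hx₁.le⟩
    obtain ⟨ymin, hymin, hmin⟩ := (isCompact_Icc).exists_isMinOn hIne hρcont'
    obtain ⟨ymax, hymax, hmax⟩ := (isCompact_Icc).exists_isMaxOn hIne hρcont'
    set m := ρb ymin with hm_def
    set M := ρb ymax with hM_def
    have hm : 0 < m := hρpos ymin (hsubI hymin)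
    have hrange : ∀ y ∈ Icc (0:ℝ) x₁, ρb y ∈ Icc m M := fun y hy =>
      ⟨isMinOn_iff.1 hmin y hy, isMaxOn_iff.1 hmax y hy⟩
    set lo := min m ρp with hlo_def
    set hi := max M ρp with hhi_def
    have hlo_pos : 0 < lo := lt_min hm hρp
    have hK'sub : Icc lo hi ⊆ Ioi 0 := fun t ht => lt_of_lt_of_le hlo_pos ht.1
    have hρpmem : ρp ∈ Icc lo hi := ⟨min_le_right _ _, le_max_right _ _⟩
    obtain ⟨C₁, hC₁⟩ := (isCompact_Icc : IsCompact (Icc lo hi)).exists_bound_of_continuousOn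
      ((continuousOn_const.mul (hgcont.mono hK'sub)).sub
        (continuousOn_const : ContinuousOn (fun _ => a) _))
    have hC₁0 : 0 ≤ C₁ := le_trans (norm_nonneg _) (hC₁ ρp hρpmem)
    obtain ⟨ξ₀, hξ₀, hgmin⟩ := (isCompact_Icc : IsCompact (Icc lo hi)).exists_isMinOn
      ⟨ρp, hρpmem⟩ (hgcont.mono hK'sub)
    set c₂ := g ξ₀ with hc₂_def
    have hc₂ : 0 < c₂ := hgpos ξ₀ (hK'sub hξ₀)
    -- |H(s)| ≤ (C₁/c₂)|F(s)| on [m, M]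
    have hHbound : ∀ s ∈ Icc m M,
        c₂ * |Hfun p μ a b ρp φp s| ≤ C₁ * |Ffun p μ ρp s| := by
      intro s hsmem
      have hspos : 0 < s := lt_of_lt_of_le hm hsmem.1
      have huIcc_sub : uIcc ρp s ⊆ Icc lo hi := by
        rw [uIcc]
        apply Icc_subset_Icc
        · exact le_min (min_le_right _ _) (le_trans (min_le_left _ _) hsmem.1)
        · exact max_le (le_max_right _ _) (le_trans hsmem.2 (le_max_left _ _))
      obtain ⟨ξ, hξ, hHs⟩ := aux_mvt hHderiv hρp hspos
      obtain ⟨η, hη, hFs⟩ := aux_mvt hFderiv hρp hspos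
      rw [hHρp, sub_zero] at hHs
      rw [hF0, sub_zero] at hFs
      have h1 : |Hfun p μ a b ρp φp s| ≤ C₁ * |s - ρp| := by
        rw [hHs, abs_mul]
        have hb1 := hC₁ ξ (huIcc_sub hξ)
        rw [Real.norm_eq_abs] at hb1
        exact mul_le_mul_of_nonneg_right hb1 (abs_nonneg _)
      have h2 : c₂ * |s - ρp| ≤ |Ffun p μ ρp s| := by
        rw [hFs, abs_mul]
        have hgη : c₂ ≤ g η := isMinOn_iff.1 hgmin η (huIcc_sub hη)
        rw [abs_of_pos (hgpos η (hK'sub (huIcc_sub hη)))]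
        exact mul_le_mul_of_nonneg_right hgη (abs_nonneg _)
      calc c₂ * |Hfun p μ a b ρp φp s| ≤ c₂ * (C₁ * |s - ρp|) :=
            mul_le_mul_of_nonneg_left h1 hc₂.le
        _ = C₁ * (c₂ * |s - ρp|) := by ring
        _ ≤ C₁ * |Ffun p μ ρp s| := mul_le_mul_of_nonneg_left h2 hC₁0
    -- Grönwall: φb = φp on (0, x₁)
    have hvanish : ∀ δ₀ : ℝ, 0 < δ₀ → δ₀ < x₁ → φb δ₀ = φp := by
      intro δ₀ hδ₀ hδ₀x₁
      set K : ℝ := max 1 (C₁ / c₂) with hK_def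
      have hK1 : (1:ℝ) ≤ K := le_max_left _ _
      set V : ℝ → ℝ × ℝ := fun t => (φb (x₁ - t) - φp, deriv φb (x₁ - t)) with hV_def
      set W : ℝ → ℝ × ℝ :=
        fun t => (-(deriv φb (x₁ - t)), -(Hfun p μ a b ρp φp (ρb (x₁ - t)))) with hW_def
      have hinner : ∀ t : ℝ, HasDerivAt (fun u => x₁ - u) (-1) t := fun t =>
        HasDerivAt.const_sub x₁ (hasDerivAt_id t)
      have hVd : ∀ t ∈ Ico (0:ℝ) (x₁ - δ₀), HasDerivWithinAt V (W t) (Ici t) t := by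
        intro t ht
        have hpos : 0 < x₁ - t := by have := ht.2; linarith
        have h1 : HasDerivAt (fun u => φb (x₁ - u) - φp) (-(deriv φb (x₁ - t))) t := by
          have h := ((hφdiff (x₁ - t) hpos).comp t (hinner t)).sub_const φp
          exact h.congr_deriv (by ring)
        have h2 : HasDerivAt (fun u => deriv φb (x₁ - u))
            (-(Hfun p μ a b ρp φp (ρb (x₁ - t)))) t := by
          have h := (hwderiv (x₁ - t) hpos).comp t (hinner t)
          exact h.congr_deriv (by ring)
        exact (h1.prodMk h2).hasDerivWithinAt
      have hVcont : ContinuousOn V (Icc 0 (x₁ - δ₀)) := by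
        intro t ht
        have hpos : 0 < x₁ - t := by have := ht.2; linarith
        have c1 : ContinuousAt (fun u => φb (x₁ - u) - φp) t :=
          (((hφdiff _ hpos).comp t (hinner t)).sub_const φp).continuousAt
        have c2 : ContinuousAt (fun u => deriv φb (x₁ - u)) t :=
          ((hwderiv _ hpos).comp t (hinner t)).continuousAt
        exact (c1.prodMk c2).continuousWithinAt
      have hV0 : ‖V 0‖ ≤ 0 := by
        have hV0' : V 0 = (0, 0) := by
          rw [hV_def]
          simp only [sub_zero, hψx₁, hwx₁, sub_self]
        rw [hV0']
        simp
      have hbound : ∀ t ∈ Ico (0:ℝ) (x₁ - δ₀), ‖W t‖ ≤ K * ‖V t‖ + 0 := by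
        intro t ht
        have hpos : 0 < x₁ - t := by have := ht.2; linarith
        have hy0 : (0:ℝ) ≤ x₁ - t := hpos.le
        have hyx : x₁ - t ≤ x₁ := by have := ht.1; linarith
        have hmem : ρb (x₁ - t) ∈ Icc m M := hrange _ ⟨hy0, hyx⟩
        have hψeq : φb (x₁ - t) - φp = Ffun p μ ρp (ρb (x₁ - t)) := by
          rw [hA _ hy0]; ring
        have hmax0 : (0:ℝ) ≤ max |φb (x₁ - t) - φp| |deriv φb (x₁ - t)| :=
          le_trans (abs_nonneg _) (le_max_left _ _)
        rw [hV_def, hW_def, Prod.norm_def, Prod.norm_def]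
        simp only [norm_neg, Real.norm_eq_abs, add_zero]
        apply max_le
        · calc |deriv φb (x₁ - t)| ≤ max |φb (x₁ - t) - φp| |deriv φb (x₁ - t)| :=
                le_max_right _ _
            _ = 1 * max |φb (x₁ - t) - φp| |deriv φb (x₁ - t)| := (one_mul _).symm
            _ ≤ K * max |φb (x₁ - t) - φp| |deriv φb (x₁ - t)| :=
                mul_le_mul_of_nonneg_right hK1 hmax0
        · have h1 := hHbound _ hmem
          have h2 : |Hfun p μ a b ρp φp (ρb (x₁ - t))| ≤
              (C₁ / c₂) * |Ffun p μ ρp (ρb (x₁ - t))| := by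
            rw [div_mul_eq_mul_div, le_div_iff₀ hc₂]
            nlinarith [h1]
          calc |Hfun p μ a b ρp φp (ρb (x₁ - t))|
              ≤ (C₁ / c₂) * |Ffun p μ ρp (ρb (x₁ - t))| := h2
            _ = (C₁ / c₂) * |φb (x₁ - t) - φp| := by rw [hψeq]
            _ ≤ K * |φb (x₁ - t) - φp| :=
                mul_le_mul_of_nonneg_right (le_max_right _ _) (abs_nonneg _)
            _ ≤ K * max |φb (x₁ - t) - φp| |deriv φb (x₁ - t)| :=
                mul_le_mul_of_nonneg_left (le_max_left _ _) (le_trans zero_le_one hK1)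
      have hgron := norm_le_gronwallBound_of_norm_deriv_right_le hVcont hVd hV0 hbound
      have hend : ‖V (x₁ - δ₀)‖ ≤ 0 := by
        have h := hgron (x₁ - δ₀) ⟨by linarith, le_rfl⟩
        rwa [gronwallBound_ε0_δ0] at h
      have hVz : V (x₁ - δ₀) = 0 := norm_le_zero_iff.1 hend
      have h1 : φb (x₁ - (x₁ - δ₀)) - φp = 0 := congrArg Prod.fst hVz
      rw [show x₁ - (x₁ - δ₀) = δ₀ by ring] at h1
      linarith
    -- contradiction with φb 0 = φm ≠ φp
    have h1 : Tendsto φb (nhdsWithin 0 (Ioi 0)) (nhds (φb 0)) :=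
      (hφcont 0 Set.self_mem_Ici).mono_left (nhdsWithin_mono 0 Ioi_subset_Ici_self)
    have h2 : Tendsto φb (nhdsWithin 0 (Ioi 0)) (nhds φp) := by
      refine Tendsto.congr' ?_ tendsto_const_nhds
      filter_upwards [Ioo_mem_nhdsGT_of_mem (show (0:ℝ) ∈ Ico 0 x₁ from ⟨le_rfl, hx₁⟩)] with y hy
      exact (hvanish y hy.1 hy.2).symm
    have h3 := tendsto_nhds_unique h1 h2
    rw [hφ0] at h3
    exact hne h3
  -- the derivative of φb never vanishes on (0,∞)
  have hwne : ∀ x : ℝ, 0 < x → deriv φb x ≠ 0 := by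
    intro x hx hw0
    have h := henergy x hx
    rw [hw0] at h
    nlinarith [hGpos _ (hρpos x hx.le) (hnever x hx)]
  -- dichotomy: deriv φb has constant sign on (0,∞)
  have hdichot : (∀ x : ℝ, 0 < x → deriv φb x < 0) ∨ (∀ x : ℝ, 0 < x → 0 < deriv φb x) := by
    by_contra hcon
    push_neg at hcon
    obtain ⟨⟨x₀, hx₀, hw₀⟩, ⟨x₁, hx₁, hw₁⟩⟩ := hcon
    have hw₀' : 0 < deriv φb x₀ := lt_of_le_of_ne hw₀ (Ne.symm (hwne x₀ hx₀))
    have hw₁' : deriv φb x₁ < 0 := lt_of_le_of_ne hw₁ (hwne x₁ hx₁)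
    have hsub : uIcc x₀ x₁ ⊆ Ioi 0 := fun t ht => lt_of_lt_of_le (lt_min hx₀ hx₁) ht.1
    have hivt := intermediate_value_uIcc (hwcont.mono hsub)
    have h0mem : (0:ℝ) ∈ uIcc (deriv φb x₀) (deriv φb x₁) := by
      rw [Set.mem_uIcc]
      right
      exact ⟨hw₁'.le, hw₀'.le⟩
    obtain ⟨c, hc, hc'⟩ := hivt h0mem
    exact hwne c (hsub hc) hc'
  refine ⟨hB, hA, ?_, ?_⟩
  · -- φp < φm : decreasing case
    intro hφlt x hx
    have hwneg : ∀ y : ℝ, 0 < y → deriv φb y < 0 := by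
      rcases hdichot with h | h
      · exact h
      · exfalso
        have hmono : StrictMonoOn φb (Ici 0) := by
          apply strictMonoOn_of_deriv_pos (convex_Ici 0) hφcont
          intro t ht
          rw [interior_Ici] at ht
          exact h t ht
        have h1 : φb 0 < φb 1 :=
          hmono Set.self_mem_Ici (mem_Ici.2 zero_le_one) one_pos
        have h2 : φb 1 ≤ φp := by
          apply ge_of_tendsto hφtend
          filter_upwards [eventually_ge_atTop (1:ℝ)] with y hy
          rcases eq_or_lt_of_le hy with he | hl
          · rw [← he]
          · exact (hmono (mem_Ici.2 zero_le_one) (mem_Ici.2 (by linarith)) hl).le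
        rw [hφ0] at h1
        linarith
    have hG := henergy x hx
    have hw := hwneg x hx
    have hsqrt : Real.sqrt (Gfun p μ a b ρp φp (ρb x)) = -(deriv φb x) := by
      rw [← hG, Real.sqrt_sq_eq_abs, abs_of_neg hw]
    rw [hsqrt, neg_neg]
    have hgne : g (ρb x) ≠ 0 := ne_of_gt (hgpos _ (hρpos x hx.le))
    rw [hkey x hx, mul_comm, mul_div_assoc, div_self hgne, mul_one]
  · -- φm < φp : increasing case
    intro hφlt x hx
    have hwpos : ∀ y : ℝ, 0 < y → 0 < deriv φb y := by
      rcases hdichot with h | h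
      · exfalso
        have hanti : StrictAntiOn φb (Ici 0) := by
          apply strictAntiOn_of_deriv_neg (convex_Ici 0) hφcont
          intro t ht
          rw [interior_Ici] at ht
          exact h t ht
        have h1 : φb 1 < φb 0 :=
          hanti Set.self_mem_Ici (mem_Ici.2 zero_le_one) one_pos
        have h2 : φp ≤ φb 1 := by
          apply le_of_tendsto hφtend
          filter_upwards [eventually_ge_atTop (1:ℝ)] with y hy
          rcases eq_or_lt_of_le hy with he | hl
          · rw [← he]
          · exact (hanti (mem_Ici.2 zero_le_one) (mem_Ici.2 (by linarith)) hl).le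
        rw [hφ0] at h1
        linarith
      · exact h
    have hG := henergy x hx
    have hw := hwpos x hx
    have hsqrt : Real.sqrt (Gfun p μ a b ρp φp (ρb x)) = deriv φb x := by
      rw [← hG, Real.sqrt_sq_eq_abs, abs_of_pos hw]
    rw [hsqrt]
    have hgne : g (ρb x) ≠ 0 := ne_of_gt (hgpos _ (hρpos x hx.le))
    rw [hkey x hx, mul_comm, mul_div_assoc, div_self hgne, mul_one]


end
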